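/- Selberg's identity for Kloosterman sums: for positive integers m, n, c, S(m, n; c) = Σ_{d | gcd(m, n, c)} d · S(mn/d², 1; c/d). -/

import Mathlib

noncomputable section
open Finset Complex

/-- The Kloosterman sum `S(m, n; c) = Σ_{1≤a,b≤c, ab≡1 mod c} e((ma + nb)/c)`. -/
def kloos (m n : ℤ) (c : ℕ) : ℂ :=
  ∑ a ∈ Finset.Icc 1 c, ∑ b ∈ Finset.Icc 1 c,
    if a * b % c = 1 % c then
      Complex.exp (2 * Real.pi * Complex.I * ((m * a + n * b : ℤ) : ℂ) / (c : ℂ))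
    else 0

def ee (q : ℕ) (k : ℤ) : ℂ := Complex.exp (2 * Real.pi * Complex.I * (k : ℂ) / (q : ℂ))

lemma ee_add (q : ℕ) (j k : ℤ) : ee q (j + k) = ee q j * ee q k := by
  rw [ee, ee, ee, ← Complex.exp_add]
  congr 1
  push_cast
  ring

lemma ee_dvd_eq_one (q : ℕ) (k : ℤ) (h : (q : ℤ) ∣ k) : ee q k = 1 := by
  rcases h with ⟨j, rfl⟩
  rcases eq_or_ne q 0 with rfl | hq
  · simp [ee]
  · rw [ee]
    have hqc : (q : ℂ) ≠ 0 := Nat.cast_ne_zero.mpr hq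
    have : 2 * Real.pi * Complex.I * ((q : ℤ) * j : ℤ) / (q : ℂ) = (j : ℂ) * (2 * Real.pi * Complex.I) := by
      push_cast
      field_simp
    rw [this, Complex.exp_int_mul_two_pi_mul_I]

lemma ee_congr (q : ℕ) (j k : ℤ) (h : (q : ℤ) ∣ (j - k)) : ee q j = ee q k := by
  have : j = k + (j - k) := by ring
  rw [this, ee_add, ee_dvd_eq_one q _ h, mul_one]

lemma ee_eq_one_iff (q : ℕ) (hq : 0 < q) (k : ℤ) : ee q k = 1 ↔ (q : ℤ) ∣ k := by
  constructor
  · intro h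
    rw [ee, Complex.exp_eq_one_iff] at h
    obtain ⟨j, hj⟩ := h
    have hqc : (q : ℂ) ≠ 0 := Nat.cast_ne_zero.mpr hq.ne'
    have h2 : (2 * Real.pi * Complex.I) ≠ 0 := by
      simp [Real.pi_ne_zero, Complex.I_ne_zero, Complex.ofReal_ne_zero]
    have hkj : (k : ℂ) = (j : ℂ) * (q : ℂ) := by
      field_simp at hj
      have hj2 : (2 * (Real.pi:ℂ) * Complex.I) * (k:ℂ) = (2 * (Real.pi:ℂ) * Complex.I) * ((j:ℂ) * (q:ℂ)) := by
        linear_combination (2 * (Real.pi:ℂ) * Complex.I) * hj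
      exact mul_left_cancel₀ h2 hj2
    have hk : k = j * q := by exact_mod_cast hkj
    exact ⟨j, by rw [hk]; ring⟩
  · exact ee_dvd_eq_one q k
lemma ee_pow (q : ℕ) (u : ℤ) (s : ℕ) : ee q (u * s) = ee q u ^ s := by
  induction s with
  | zero => simp [ee]
  | succ t ih =>
      have : u * ((t : ℤ) + 1) = u * t + u := by ring
      rw [Nat.cast_succ, this, ee_add, ih, pow_succ]

lemma ee_sum (q : ℕ) (hq : 0 < q) (u : ℤ) :
    ∑ s ∈ Finset.range q, ee q (u * s) = if (q : ℤ) ∣ u then (q : ℂ) else 0 := by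
  by_cases h : (q : ℤ) ∣ u
  · simp only [h, if_true]
    have : ∀ s ∈ Finset.range q, ee q (u * s) = 1 := fun s _ =>
      ee_dvd_eq_one q _ (Dvd.dvd.mul_right h _)
    rw [Finset.sum_congr rfl this]
    simp
  · simp only [h, if_false]
    have hz : ee q u ≠ 1 := fun hh => h ((ee_eq_one_iff q hq u).mp hh)
    have hzq : ee q u ^ q = 1 := by
      rw [← ee_pow]
      exact ee_dvd_eq_one q _ ⟨u, by ring⟩
    have := geom_sum_eq hz q
    rw [Finset.sum_congr rfl (fun s _ => ee_pow q u s), this, hzq]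
    simp

lemma ee_of_zmod_eq {c : ℕ} {j k : ℤ} (h : ((j : ZMod c)) = (k : ZMod c)) :
    ee c j = ee c k := by
  have := (ZMod.intCast_eq_intCast_iff j k c).mp h
  exact ee_congr c j k (Int.ModEq.dvd this.symm)

/-- cast of val back into ZMod -/
lemma zmod_cast_val {c : ℕ} [NeZero c] (x : ZMod c) : ((x.val : ℕ) : ZMod c) = x :=
  ZMod.natCast_rightInverse x

def KK (m n c : ℕ) [NeZero c] : ℂ :=
  ∑ x : ZMod c, ∑ y : ZMod c,
    if x * y = 1 then ee c (m * x.val + n * y.val) else 0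

lemma cond_iff (a b c : ℕ) : a * b % c = 1 % c ↔ ((a : ZMod c) * b = 1) := by
  have : ((a : ZMod c) * b = 1) ↔ ((a * b : ℕ) : ZMod c) = ((1 : ℕ) : ZMod c) := by
    push_cast; rfl
  rw [this, ZMod.natCast_eq_natCast_iff]
  exact Iff.rfl

lemma expo_eq (m n c : ℕ) [NeZero c] (a b : ℕ) :
    Complex.exp (2 * Real.pi * Complex.I * ((m * a + n * b : ℤ) : ℂ) / (c : ℂ))
      = ee c (m * ((a : ZMod c)).val + n * ((b : ZMod c)).val) := by
  have h1 : (ee c ((m * a + n * b : ℤ))) = ee c (m * ((a : ZMod c)).val + n * ((b : ZMod c)).val) := by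
    apply ee_of_zmod_eq
    push_cast
    rw [zmod_cast_val, zmod_cast_val]
  rw [← h1, ee]

lemma kloos_eq_KK (m n c : ℕ) (hc : 0 < c) [NeZero c] :
    kloos (m : ℤ) (n : ℤ) c = KK m n c := by
  rw [kloos, KK]
  have jmem : ∀ x : ZMod c, (if x.val = 0 then c else x.val) ∈ Finset.Icc 1 c := by
    intro x
    simp only [Finset.mem_Icc]
    have := ZMod.val_lt x
    split <;> omega
  have jleft : ∀ a ∈ Finset.Icc 1 c, (if ((a : ZMod c)).val = 0 then c else ((a : ZMod c)).val) = a := by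
    intro a ha
    simp only [Finset.mem_Icc] at ha
    rw [ZMod.val_natCast]
    rcases eq_or_lt_of_le ha.2 with rfl | h
    · simp [Nat.mod_self]
    · rw [Nat.mod_eq_of_lt h]
      have : a ≠ 0 := by omega
      simp [this]
  have jright : ∀ x : ZMod c, (((if x.val = 0 then c else x.val) : ℕ) : ZMod c) = x := by
    intro x
    split
    · next h =>
        rw [ZMod.natCast_self]
        rw [← zmod_cast_val x, h]
        simp
    · next h => exact zmod_cast_val x
  refine Finset.sum_bij' (i := fun (a : ℕ) (_ : a ∈ Finset.Icc 1 c) => (a : ZMod c))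
    (j := fun (x : ZMod c) (_ : x ∈ Finset.univ) => if x.val = 0 then c else x.val)
    (fun a _ => Finset.mem_univ _) (fun x _ => jmem x) (fun a ha => jleft a ha)
    (fun x _ => jright x) ?_
  intro a ha
  refine Finset.sum_bij' (i := fun (b : ℕ) (_ : b ∈ Finset.Icc 1 c) => (b : ZMod c))
    (j := fun (y : ZMod c) (_ : y ∈ Finset.univ) => if y.val = 0 then c else y.val)
    (fun b _ => Finset.mem_univ _) (fun y _ => jmem y) (fun b hb => jleft b hb)
    (fun y _ => jright y) ?_
  intro b hb
  by_cases hcond : a * b % c = 1 % c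
  · rw [if_pos hcond, if_pos ((cond_iff a b c).mp hcond)]
    exact expo_eq m n c a b
  · rw [if_neg hcond, if_neg (fun hh => hcond ((cond_iff a b c).mpr hh))]

lemma sum_zmod_val {c : ℕ} [NeZero c] (f : ℕ → ℂ) :
    ∑ t : ZMod c, f t.val = ∑ s ∈ Finset.range c, f s := by
  refine Finset.sum_bij' (i := fun (t : ZMod c) (_ : t ∈ Finset.univ) => t.val)
    (j := fun (s : ℕ) (_ : s ∈ Finset.range c) => (s : ZMod c))
    (fun t _ => Finset.mem_range.mpr (ZMod.val_lt t)) (fun s _ => Finset.mem_univ _)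
    (fun t _ => zmod_cast_val t) ?_ (fun t _ => rfl)
  intro s hs
  exact ZMod.val_cast_of_lt (Finset.mem_range.mp hs)

lemma OO (c : ℕ) (hc : 0 < c) [NeZero c] (z : ZMod c) :
    ∑ t : ZMod c, ee c ((t.val : ℤ) * (z.val : ℤ)) = if z = 0 then (c : ℂ) else 0 := by
  have : ∀ t : ZMod c, ee c ((t.val : ℤ) * (z.val : ℤ)) = ee c ((z.val : ℤ) * (t.val : ℤ)) := by
    intro t; rw [mul_comm]
  rw [Finset.sum_congr rfl (fun t _ => this t)]
  rw [sum_zmod_val (fun s => ee c ((z.val : ℤ) * s))]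
  rw [ee_sum c hc (z.val : ℤ)]
  have hdvd : ((c : ℤ) ∣ (z.val : ℤ)) ↔ z = 0 := by
    rw [Int.natCast_dvd_natCast, ← ZMod.val_eq_zero]
    constructor
    · intro h
      exact Nat.eq_zero_of_dvd_of_lt h (ZMod.val_lt z)
    · intro h; rw [h]; exact dvd_zero c
  by_cases h : z = 0
  · rw [if_pos (hdvd.mpr h), if_pos h]
  · rw [if_neg (fun hh => h (hdvd.mp hh)), if_neg h]

def SS (m n c : ℕ) [NeZero c] : ℂ :=
  ∑ p ∈ (Finset.univ ×ˢ Finset.univ).filter (fun p : ZMod c × ZMod c => p.1 * p.2 = (n : ZMod c)),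
    ee c (m * p.2.val + p.1.val)

set_option maxHeartbeats 1600000 in
lemma KK_eq_SS (m n c : ℕ) (hc : 0 < c) [NeZero c] : KK m n c = SS m n c := by
  have hcC : (c : ℂ) ≠ 0 := Nat.cast_ne_zero.mpr hc.ne'
  set expo : ZMod c → ZMod c → ZMod c → ℤ :=
    fun t x y => (t.val : ℤ) * (((1 : ZMod c) - x * y).val : ℤ) + m * x.val + n * y.val with hexpo
  have M1 : ∀ x y : ZMod c, ∑ t : ZMod c, ee c (expo t x y)
      = if x * y = 1 then (c : ℂ) * ee c (m * x.val + n * y.val) else 0 := by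
    intro x y
    have h1 : ∀ t : ZMod c, ee c (expo t x y)
        = ee c ((t.val : ℤ) * (((1 : ZMod c) - x * y).val : ℤ)) * ee c (m * x.val + n * y.val) := by
      intro t
      rw [← ee_add]
      congr 1
      rw [hexpo]; ring
    rw [Finset.sum_congr rfl (fun t _ => h1 t), ← Finset.sum_mul, OO c hc]
    have : ((1 : ZMod c) - x * y = 0) ↔ x * y = 1 := by
      rw [sub_eq_zero]; exact eq_comm
    by_cases h : x * y = 1
    · rw [if_pos (this.mpr h), if_pos h]
    · rw [if_neg (fun hh => h (this.mp hh)), if_neg h, zero_mul]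
  have M2 : ∀ t x : ZMod c, ∑ y : ZMod c, ee c (expo t x y)
      = if t * x = (n : ZMod c) then (c : ℂ) * ee c (m * x.val + t.val) else 0 := by
    intro t x
    have h1 : ∀ y : ZMod c, ee c (expo t x y)
        = ee c ((y.val : ℤ) * ((((n : ZMod c) - t * x)).val : ℤ)) * ee c (m * x.val + t.val) := by
      intro y
      rw [← ee_add]
      apply ee_of_zmod_eq
      rw [hexpo]
      push_cast
      rw [zmod_cast_val, zmod_cast_val, zmod_cast_val, zmod_cast_val, zmod_cast_val]
      ring
    rw [Finset.sum_congr rfl (fun y _ => h1 y), ← Finset.sum_mul, OO c hc]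
    have : ((n : ZMod c) - t * x = 0) ↔ t * x = (n : ZMod c) := by
      rw [sub_eq_zero]; exact eq_comm
    by_cases h : t * x = (n : ZMod c)
    · rw [if_pos (this.mpr h), if_pos h]
    · rw [if_neg (fun hh => h (this.mp hh)), if_neg h, zero_mul]
  have key : (c : ℂ) * KK m n c = (c : ℂ) * SS m n c := by
    have lhs : (c : ℂ) * KK m n c = ∑ x : ZMod c, ∑ y : ZMod c, ∑ t : ZMod c, ee c (expo t x y) := by
      rw [KK, Finset.mul_sum]
      refine Finset.sum_congr rfl (fun x _ => ?_)
      rw [Finset.mul_sum]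
      refine Finset.sum_congr rfl (fun y _ => ?_)
      rw [M1 x y]
      by_cases h : x * y = 1
      · rw [if_pos h, if_pos h]
      · rw [if_neg h, if_neg h, mul_zero]
    have swap : ∑ x : ZMod c, ∑ y : ZMod c, ∑ t : ZMod c, ee c (expo t x y)
        = ∑ t : ZMod c, ∑ x : ZMod c, ∑ y : ZMod c, ee c (expo t x y) := by
      have h1 : ∀ x : ZMod c, ∑ y : ZMod c, ∑ t : ZMod c, ee c (expo t x y)
          = ∑ t : ZMod c, ∑ y : ZMod c, ee c (expo t x y) := fun x => Finset.sum_comm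
      rw [Finset.sum_congr rfl (fun x _ => h1 x)]
      exact Finset.sum_comm
    have rhs : ∑ t : ZMod c, ∑ x : ZMod c, ∑ y : ZMod c, ee c (expo t x y)
        = (c : ℂ) * SS m n c := by
      rw [SS, Finset.mul_sum, Finset.sum_filter, Finset.sum_product]
      refine Finset.sum_congr rfl (fun t _ => ?_)
      refine Finset.sum_congr rfl (fun x _ => ?_)
      exact M2 t x
    rw [lhs, swap, rhs]
  exact mul_left_cancel₀ hcC key

lemma ee_cancel (a q : ℕ) (k : ℤ) (ha : a ≠ 0) (hq : q ≠ 0) : ee (a * q) (a * k) = ee q k := by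
  rw [ee, ee]
  congr 1
  have haC : (a : ℂ) ≠ 0 := Nat.cast_ne_zero.mpr ha
  have hqC : (q : ℂ) ≠ 0 := Nat.cast_ne_zero.mpr hq
  push_cast
  field_simp

def T (M N q : ℕ) : ℂ :=
  ∑ p ∈ ((Finset.range q) ×ˢ (Finset.range q)).filter (fun p : ℕ × ℕ => p.1 * p.2 % q = N % q),
    ee q (M * p.2 + p.1)

lemma SS_eq_T (m n c : ℕ) (hc : 0 < c) [NeZero c] : SS m n c = T m n c := by
  rw [SS, T]
  refine Finset.sum_bij' (i := fun (p : ZMod c × ZMod c) (_ : p ∈ _) => (p.1.val, p.2.val))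
    (j := fun (p : ℕ × ℕ) (_ : p ∈ _) => (((p.1 : ZMod c)), ((p.2 : ZMod c)))) ?_ ?_ ?_ ?_ ?_
  · intro p hp
    simp only [Finset.mem_filter, Finset.mem_product, Finset.mem_range, Finset.mem_univ,
      true_and] at hp ⊢
    refine ⟨⟨ZMod.val_lt _, ZMod.val_lt _⟩, ?_⟩
    have : ((p.1.val * p.2.val : ℕ) : ZMod c) = ((n : ℕ) : ZMod c) := by
      push_cast
      rw [zmod_cast_val, zmod_cast_val]
      exact hp
    exact (ZMod.natCast_eq_natCast_iff _ _ _).mp this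
  · intro p hp
    simp only [Finset.mem_filter, Finset.mem_product, Finset.mem_range, Finset.mem_univ,
      true_and] at hp ⊢
    have := (ZMod.natCast_eq_natCast_iff (p.1 * p.2) n c).mpr hp.2
    push_cast at this
    exact this
  · intro p hp
    simp only [zmod_cast_val]
  · intro p hp
    simp only [Finset.mem_filter, Finset.mem_product, Finset.mem_range] at hp
    simp only [ZMod.val_cast_of_lt hp.1.1, ZMod.val_cast_of_lt hp.1.2]
  · intro p hp
    rfl

def W (q : ℕ) : Finset (ℕ × ℕ) :=
  ((Finset.range q) ×ˢ (Finset.range q)).filter (fun p : ℕ × ℕ => p.1 * p.2 % q = 1 % q)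

set_option maxHeartbeats 1600000 in
lemma T_eq_sigma (m n c : ℕ) (hc : 0 < c) :
    T m n c = ∑ d ∈ (n.gcd c).divisors, ∑ p ∈ W (c/d), ∑ s ∈ Finset.range d,
      ee c ((m * ((n/d * p.2) % (c/d) + s * (c/d)) + d * p.1 : ℕ)) := by
  have hgcd0 : n.gcd c ≠ 0 := fun h => hc.ne' (Nat.eq_zero_of_gcd_eq_zero_right h)
  -- convert RHS to a sigma-type sum
  have hRHS : (∑ d ∈ (n.gcd c).divisors, ∑ p ∈ W (c/d), ∑ s ∈ Finset.range d,
      ee c ((m * ((n/d * p.2) % (c/d) + s * (c/d)) + d * p.1 : ℕ)))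
      = ∑ q ∈ (n.gcd c).divisors.sigma (fun d => (W (c/d)) ×ˢ Finset.range d),
          ee c ((m * ((n/q.1 * q.2.1.2) % (c/q.1) + q.2.2 * (c/q.1)) + q.1 * q.2.1.1 : ℕ)) := by
    rw [Finset.sum_sigma]
    refine Finset.sum_congr rfl (fun d _ => ?_)
    rw [Finset.sum_product]
  rw [hRHS, T]
  refine (Finset.sum_bij'
    (i := fun (q : Σ _ : ℕ, (ℕ × ℕ) × ℕ) (_ : q ∈ _) =>
      ((q.1 * q.2.1.1, (n/q.1 * q.2.1.2) % (c/q.1) + q.2.2 * (c/q.1)) : ℕ × ℕ))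
    (j := fun (p : ℕ × ℕ) (_ : p ∈ _) =>
      (⟨p.1.gcd c, ((p.1 / p.1.gcd c,
        (((p.1 / p.1.gcd c : ℕ) : ZMod (c / p.1.gcd c))⁻¹).val), p.2 / (c / p.1.gcd c))⟩ :
        Σ _ : ℕ, (ℕ × ℕ) × ℕ))
    ?_ ?_ ?_ ?_ ?_).symm
  · -- i maps into P
    rintro ⟨d, ⟨v, u⟩, s⟩ hq
    simp only [Finset.mem_sigma, Finset.mem_product, Finset.mem_range, W,
      Finset.mem_filter, Nat.mem_divisors] at hq
    obtain ⟨⟨hdg, -⟩, ⟨⟨hv, hu⟩, hvu⟩, hs⟩ := hq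
    have hdn : d ∣ n := hdg.trans (Nat.gcd_dvd_left _ _)
    have hdc : d ∣ c := hdg.trans (Nat.gcd_dvd_right _ _)
    have hd0 : 0 < d := Nat.pos_of_ne_zero (fun h => hgcd0 (Nat.eq_zero_of_zero_dvd (h ▸ hdg)))
    have hc' : 0 < c / d := Nat.div_pos (Nat.le_of_dvd hc hdc) hd0
    have hcd : d * (c / d) = c := Nat.mul_div_cancel' hdc
    simp only [Finset.mem_filter, Finset.mem_product, Finset.mem_range]
    have hX : (n/d * u) % (c/d) < c/d := Nat.mod_lt _ hc'
    refine ⟨⟨?_, ?_⟩, ?_⟩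
    · calc d * v < d * (c/d) := by exact (mul_lt_mul_iff_right₀ hd0).mpr hv
        _ = c := hcd
    · calc (n/d * u) % (c/d) + s * (c/d) < c/d + s * (c/d) := by omega
        _ = (s+1) * (c/d) := by ring
        _ ≤ d * (c/d) := Nat.mul_le_mul_right _ (by omega)
        _ = c := hcd
    · -- the congruence
      show (d * v) * ((n/d * u) % (c/d) + s * (c/d)) % c = n % c
      have key : v * ((n/d * u) % (c/d)) ≡ n/d [MOD c/d] := by
        calc v * ((n/d * u) % (c/d)) ≡ v * (n/d * u) [MOD c/d] :=
              Nat.ModEq.mul_left v (Nat.mod_modEq _ _)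
          _ = (v * u) * (n/d) := by ring
          _ ≡ 1 * (n/d) [MOD c/d] := Nat.ModEq.mul_right _ hvu
          _ = n/d := by ring
      have key2 : d * (v * ((n/d * u) % (c/d))) ≡ n [MOD c] := by
        have := Nat.ModEq.mul_left' (c := d) key
        rw [hcd, Nat.mul_div_cancel' hdn] at this
        exact this
      calc (d * v) * ((n/d * u) % (c/d) + s * (c/d)) % c
          = (d * (v * ((n/d * u) % (c/d))) + (v * s) * (d * (c/d))) % c := by ring_nf
        _ = (d * (v * ((n/d * u) % (c/d))) + (v * s) * c) % c := by rw [hcd]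
        _ = d * (v * ((n/d * u) % (c/d))) % c := Nat.add_mul_mod_self_right _ _ _
        _ = n % c := key2
  · -- j maps into Sg
    rintro ⟨t, x⟩ hp
    simp only [Finset.mem_filter, Finset.mem_product, Finset.mem_range] at hp
    obtain ⟨⟨ht, hx⟩, htx⟩ := hp
    have hd0 : 0 < t.gcd c := Nat.gcd_pos_of_pos_right _ hc
    have hdc : t.gcd c ∣ c := Nat.gcd_dvd_right _ _
    have hdt : t.gcd c ∣ t := Nat.gcd_dvd_left _ _
    have hc' : 0 < c / t.gcd c := Nat.div_pos (Nat.le_of_dvd hc hdc) hd0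
    haveI : NeZero (c / t.gcd c) := ⟨hc'.ne'⟩
    have hdn : t.gcd c ∣ n := by
      have h1 : (c : ℤ) ∣ (n : ℤ) - (t * x : ℕ) := (Nat.modEq_iff_dvd).mp htx
      have h2 : ((t.gcd c : ℕ) : ℤ) ∣ (n : ℤ) := by
        have h3 : ((t.gcd c : ℕ) : ℤ) ∣ (n : ℤ) - (t * x : ℕ) :=
          dvd_trans (Int.natCast_dvd_natCast.mpr hdc) h1
        have h4 : ((t.gcd c : ℕ) : ℤ) ∣ ((t * x : ℕ) : ℤ) := by
          push_cast
          exact Dvd.dvd.mul_right (Int.natCast_dvd_natCast.mpr hdt) _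
        have := dvd_add h3 h4
        simpa using this
      exact Int.natCast_dvd_natCast.mp h2
    simp only [Finset.mem_sigma, Finset.mem_product, Finset.mem_range, W,
      Finset.mem_filter, Nat.mem_divisors]
    have hco : Nat.Coprime (t / t.gcd c) (c / t.gcd c) := Nat.coprime_div_gcd_div_gcd hd0
    have hunit : IsUnit ((t / t.gcd c : ℕ) : ZMod (c / t.gcd c)) :=
      (ZMod.isUnit_iff_coprime _ _).mpr hco
    refine ⟨⟨Nat.dvd_gcd hdn hdc, hgcd0⟩, ⟨⟨Nat.div_lt_div_of_lt_of_dvd hdc ht, ZMod.val_lt _⟩, ?_⟩, ?_⟩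
    · -- v * u ≡ 1
      have : (((t / t.gcd c) * (((t / t.gcd c : ℕ) : ZMod (c / t.gcd c))⁻¹).val : ℕ) : ZMod (c / t.gcd c))
          = ((1 : ℕ) : ZMod (c / t.gcd c)) := by
        push_cast
        rw [zmod_cast_val]
        rw [ZMod.mul_inv_of_unit _ hunit]
      exact (ZMod.natCast_eq_natCast_iff _ _ _).mp this
    · exact (Nat.div_lt_iff_lt_mul hc').mpr (by rw [Nat.mul_div_cancel' hdc]; exact hx)
  · -- left inverse : j (i q) = q
    rintro ⟨d, ⟨v, u⟩, s⟩ hq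
    simp only [Finset.mem_sigma, Finset.mem_product, Finset.mem_range, W,
      Finset.mem_filter, Nat.mem_divisors] at hq
    obtain ⟨⟨hdg, -⟩, ⟨⟨hv, hu⟩, hvu⟩, hs⟩ := hq
    have hdn : d ∣ n := hdg.trans (Nat.gcd_dvd_left _ _)
    have hdc : d ∣ c := hdg.trans (Nat.gcd_dvd_right _ _)
    have hd0 : 0 < d := Nat.pos_of_ne_zero (fun h => hgcd0 (Nat.eq_zero_of_zero_dvd (h ▸ hdg)))
    have hc' : 0 < c / d := Nat.div_pos (Nat.le_of_dvd hc hdc) hd0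
    have hcd : d * (c / d) = c := Nat.mul_div_cancel' hdc
    haveI : NeZero (c / d) := ⟨hc'.ne'⟩
    have hcov : Nat.Coprime v (c / d) := by
      have h1 : ((c/d : ℕ) : ℤ) ∣ ((v * u : ℕ) : ℤ) - 1 := by
        have h2 := (Nat.modEq_iff_dvd (n := c/d) (a := 1) (b := v * u)).mp hvu.symm
        simpa using h2
      have h3 : ((v.gcd (c/d) : ℕ) : ℤ) ∣ 1 := by
        have hg1 : ((v.gcd (c/d) : ℕ) : ℤ) ∣ ((v * u : ℕ) : ℤ) := by
          push_cast
          exact Dvd.dvd.mul_right (Int.natCast_dvd_natCast.mpr (Nat.gcd_dvd_left _ _)) _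
        have hg2 : ((v.gcd (c/d) : ℕ) : ℤ) ∣ ((c/d : ℕ) : ℤ) :=
          Int.natCast_dvd_natCast.mpr (Nat.gcd_dvd_right _ _)
        have := dvd_sub hg1 (hg2.trans h1)
        simpa using this
      have : v.gcd (c/d) ∣ 1 := by exact_mod_cast h3
      exact Nat.dvd_one.mp this
    -- gcd (d*v) c = d
    have hgdv : (d * v).gcd c = d := by
      rw [← hcd, Nat.gcd_mul_left, hcov, mul_one]
    have hdvd : (d * v) / d = v := Nat.mul_div_cancel_left v hd0
    have hinv : (((v : ℕ) : ZMod (c/d))⁻¹) = ((u : ℕ) : ZMod (c/d)) := by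
      apply ZMod.inv_eq_of_mul_eq_one
      have : ((v * u : ℕ) : ZMod (c/d)) = ((1 : ℕ) : ZMod (c/d)) :=
        (ZMod.natCast_eq_natCast_iff _ _ _).mpr hvu
      push_cast at this
      exact this
    have hsdiv : ((n/d * u) % (c/d) + s * (c/d)) / (c/d) = s := by
      rw [Nat.add_mul_div_right _ _ hc', Nat.div_eq_of_lt (Nat.mod_lt _ hc')]
      omega
    dsimp only
    rw [hgdv, hdvd, hinv, ZMod.val_cast_of_lt hu, hsdiv]
  · -- right inverse : i (j p) = p
    rintro ⟨t, x⟩ hp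
    simp only [Finset.mem_filter, Finset.mem_product, Finset.mem_range] at hp
    obtain ⟨⟨ht, hx⟩, htx⟩ := hp
    have hd0 : 0 < t.gcd c := Nat.gcd_pos_of_pos_right _ hc
    have hdc : t.gcd c ∣ c := Nat.gcd_dvd_right _ _
    have hdt : t.gcd c ∣ t := Nat.gcd_dvd_left _ _
    have hc' : 0 < c / t.gcd c := Nat.div_pos (Nat.le_of_dvd hc hdc) hd0
    have hcd : t.gcd c * (c / t.gcd c) = c := Nat.mul_div_cancel' hdc
    haveI : NeZero (c / t.gcd c) := ⟨hc'.ne'⟩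
    have hdn : t.gcd c ∣ n := by
      have h1 : (c : ℤ) ∣ (n : ℤ) - (t * x : ℕ) := (Nat.modEq_iff_dvd).mp htx
      have h3 : ((t.gcd c : ℕ) : ℤ) ∣ (n : ℤ) - (t * x : ℕ) :=
        dvd_trans (Int.natCast_dvd_natCast.mpr hdc) h1
      have h4 : ((t.gcd c : ℕ) : ℤ) ∣ ((t * x : ℕ) : ℤ) := by
        push_cast
        exact Dvd.dvd.mul_right (Int.natCast_dvd_natCast.mpr hdt) _
      have h5 := dvd_add h3 h4
      simp only [sub_add_cancel] at h5
      exact Int.natCast_dvd_natCast.mp h5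
    have hco : Nat.Coprime (t / t.gcd c) (c / t.gcd c) := Nat.coprime_div_gcd_div_gcd hd0
    have hunit : IsUnit ((t / t.gcd c : ℕ) : ZMod (c / t.gcd c)) :=
      (ZMod.isUnit_iff_coprime _ _).mpr hco
    simp only [Prod.mk.injEq]
    constructor
    · exact Nat.mul_div_cancel' hdt
    · -- x component
      have hgz : ((t.gcd c : ℕ) : ℤ) ≠ 0 := by exact_mod_cast hd0.ne'
      have h1 : (c : ℤ) ∣ (n : ℤ) - (t : ℤ) * (x : ℤ) := by
        have := (Nat.modEq_iff_dvd (n := c) (a := t * x) (b := n)).mp htx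
        push_cast at this
        exact this
      have h2 : ((c / t.gcd c : ℕ) : ℤ) ∣ ((n / t.gcd c : ℕ) : ℤ) - ((t / t.gcd c : ℕ) : ℤ) * (x : ℤ) := by
        obtain ⟨k, hk⟩ := h1
        refine ⟨k, ?_⟩
        apply mul_left_cancel₀ hgz
        have e1 : ((t.gcd c : ℕ) : ℤ) * ((n / t.gcd c : ℕ) : ℤ) = (n : ℤ) := by
          exact_mod_cast congrArg (Nat.cast : ℕ → ℤ) (Nat.mul_div_cancel' hdn)
        have e2 : ((t.gcd c : ℕ) : ℤ) * ((t / t.gcd c : ℕ) : ℤ) = (t : ℤ) := by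
          exact_mod_cast congrArg (Nat.cast : ℕ → ℤ) (Nat.mul_div_cancel' hdt)
        have e3 : ((t.gcd c : ℕ) : ℤ) * ((c / t.gcd c : ℕ) : ℤ) = (c : ℤ) := by
          exact_mod_cast congrArg (Nat.cast : ℕ → ℤ) (Nat.mul_div_cancel' hdc)
        calc ((t.gcd c : ℕ) : ℤ) * (((n / t.gcd c : ℕ) : ℤ) - ((t / t.gcd c : ℕ) : ℤ) * (x : ℤ))
            = ((t.gcd c : ℕ) : ℤ) * ((n / t.gcd c : ℕ) : ℤ)
              - (((t.gcd c : ℕ) : ℤ) * ((t / t.gcd c : ℕ) : ℤ)) * (x : ℤ) := by ring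
          _ = (n : ℤ) - (t : ℤ) * (x : ℤ) := by rw [e1, e2]
          _ = (c : ℤ) * k := hk
          _ = ((t.gcd c : ℕ) : ℤ) * (((c / t.gcd c : ℕ) : ℤ) * k) := by rw [← e3]; ring
      have hvx : ((t / t.gcd c : ℕ) : ZMod (c / t.gcd c)) * ((x : ℕ) : ZMod (c / t.gcd c))
          = ((n / t.gcd c : ℕ) : ZMod (c / t.gcd c)) := by
        have hmodeq : ((t / t.gcd c : ℕ) : ℤ) * (x : ℤ) ≡ ((n / t.gcd c : ℕ) : ℤ) [ZMOD (c / t.gcd c)] :=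
          Int.ModEq.symm ((Int.modEq_iff_dvd).mpr ?_)
        · have := (ZMod.intCast_eq_intCast_iff _ _ _).mpr hmodeq
          rw [Int.cast_mul] at this
          simp only [Int.cast_natCast] at this
          exact this
        · rw [show ((t / t.gcd c : ℕ) : ℤ) * (x : ℤ) - ((n / t.gcd c : ℕ) : ℤ)
            = -(((n / t.gcd c : ℕ) : ℤ) - ((t / t.gcd c : ℕ) : ℤ) * (x : ℤ)) by ring]
          exact h2.neg_right
      have hmod : (n / t.gcd c * (((t / t.gcd c : ℕ) : ZMod (c / t.gcd c))⁻¹).val) % (c / t.gcd c)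
          = x % (c / t.gcd c) := by
        have hcast : ((n / t.gcd c * (((t / t.gcd c : ℕ) : ZMod (c / t.gcd c))⁻¹).val : ℕ) : ZMod (c / t.gcd c))
            = ((x : ℕ) : ZMod (c / t.gcd c)) := by
          push_cast
          rw [zmod_cast_val]
          rw [← hvx]
          rw [mul_comm (((t / t.gcd c : ℕ) : ZMod (c / t.gcd c))) _, mul_assoc,
            ZMod.mul_inv_of_unit _ hunit, mul_one]
        exact (ZMod.natCast_eq_natCast_iff _ _ _).mp hcast
      rw [hmod, Nat.mod_add_div']
  · -- weights agree
    rintro ⟨d, ⟨v, u⟩, s⟩ hq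
    rfl

lemma ee_nat_congr (q A B : ℕ) (h : A ≡ B [MOD q]) : ee q A = ee q B := by
  refine ee_congr q A B ?_
  have := (Nat.modEq_iff_dvd (n := q)).mp h
  have h2 : ((A : ℤ) - B) = -((B : ℤ) - A) := by ring
  rw [h2]
  exact this.neg_right

set_option maxHeartbeats 1600000 in
lemma inner_eval (m n c d : ℕ) (hc : 0 < c) (hd0 : 0 < d) (hdn : d ∣ n) (hdc : d ∣ c) :
    ∑ p ∈ W (c/d), ∑ s ∈ Finset.range d,
        ee c ((m * ((n/d * p.2) % (c/d) + s * (c/d)) + d * p.1 : ℕ))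
      = if d ∣ m then (d : ℂ) * T (m*n/d^2) 1 (c/d) else 0 := by
  have hc' : 0 < c / d := Nat.div_pos (Nat.le_of_dvd hc hdc) hd0
  have hcd : d * (c / d) = c := Nat.mul_div_cancel' hdc
  have hsplit : ∀ p : ℕ × ℕ, ∀ s : ℕ,
      ee c ((m * ((n/d * p.2) % (c/d) + s * (c/d)) + d * p.1 : ℕ))
        = ee c ((m * ((n/d * p.2) % (c/d)) + d * p.1 : ℕ)) * ee d ((m : ℤ) * s) := by
    intro p s
    have h1 : ee c (((m * (c/d) : ℕ) : ℤ) * s) = ee d ((m : ℤ) * s) := by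
      have h2 : ee c (((m * (c/d) : ℕ) : ℤ) * s) = ee ((c/d) * d) (((c/d : ℕ) : ℤ) * ((m : ℤ) * s)) := by
        congr 1
        · rw [mul_comm]; exact hcd.symm
        · push_cast; ring
      rw [h2, ee_cancel _ _ _ hc'.ne' hd0.ne']
    rw [← h1, ← ee_add]
    congr 1
    push_cast
    ring
  have hinner : ∀ p : ℕ × ℕ,
      ∑ s ∈ Finset.range d, ee c ((m * ((n/d * p.2) % (c/d) + s * (c/d)) + d * p.1 : ℕ))
        = ee c ((m * ((n/d * p.2) % (c/d)) + d * p.1 : ℕ))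
            * (if d ∣ m then (d : ℂ) else 0) := by
    intro p
    rw [Finset.sum_congr rfl (fun s _ => hsplit p s), ← Finset.mul_sum, ee_sum d hd0 m]
    congr 1
    by_cases h : d ∣ m
    · rw [if_pos h, if_pos (Int.natCast_dvd_natCast.mpr h)]
    · rw [if_neg h, if_neg (fun hh => h (Int.natCast_dvd_natCast.mp hh))]
  rw [Finset.sum_congr rfl (fun p _ => hinner p)]
  by_cases hm : d ∣ m
  · have hval : ∀ p : ℕ × ℕ, ee c ((m * ((n/d * p.2) % (c/d)) + d * p.1 : ℕ))
        = ee (c/d) (((m*n/d^2 : ℕ) : ℤ) * p.2 + p.1) := by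
      intro p
      have e1 : ee c ((m * ((n/d * p.2) % (c/d)) + d * p.1 : ℕ))
          = ee (c/d) (((m/d) * ((n/d * p.2) % (c/d)) + p.1 : ℕ)) := by
        have h2 : ee c ((m * ((n/d * p.2) % (c/d)) + d * p.1 : ℕ))
            = ee (d * (c/d)) ((d : ℤ) * (((m/d) * ((n/d * p.2) % (c/d)) + p.1 : ℕ) : ℤ)) := by
          congr 1
          · exact hcd.symm
          · have hnat : m * ((n/d * p.2) % (c/d)) + d * p.1
                = d * ((m/d) * ((n/d * p.2) % (c/d)) + p.1) := by
              rw [Nat.mul_add, ← Nat.mul_assoc, Nat.mul_div_cancel' hm]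
            rw [hnat, Nat.cast_mul]
        rw [h2, ee_cancel _ _ _ hd0.ne' hc'.ne']
      rw [e1]
      have e2 : ((m/d) * ((n/d * p.2) % (c/d)) + p.1 : ℕ) ≡ ((m*n/d^2) * p.2 + p.1 : ℕ) [MOD c/d] := by
        have h3 : (m/d) * ((n/d * p.2) % (c/d)) ≡ (m/d) * (n/d * p.2) [MOD c/d] :=
          Nat.ModEq.mul_left _ (Nat.mod_modEq _ _)
        have h4 : (m/d) * (n/d * p.2) = (m*n/d^2) * p.2 := by
          rw [show m*n/d^2 = (m/d) * (n/d) by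
            rw [Nat.div_mul_div_comm hm hdn, pow_two]]
          ring
        exact (h3.add_right p.1).trans (by rw [h4])
      rw [ee_nat_congr _ _ _ e2]
      congr 1
      all_goals (push_cast; try ring)
    simp only [if_pos hm]
    have hT : T (m*n/d^2) 1 (c/d)
        = ∑ p ∈ W (c/d), ee (c/d) (((m*n/d^2 : ℕ) : ℤ) * p.2 + p.1) := rfl
    rw [hT, Finset.mul_sum]
    refine Finset.sum_congr rfl (fun p _ => ?_)
    rw [hval p, mul_comm]
  · simp only [if_neg hm, mul_zero, Finset.sum_const_zero]

lemma kloos_eq_T (M N q : ℕ) (hq : 0 < q) : kloos (M : ℤ) (N : ℤ) q = T M N q := by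
  haveI : NeZero q := ⟨hq.ne'⟩
  rw [kloos_eq_KK M N q hq, KK_eq_SS M N q hq, SS_eq_T M N q hq]

theorem selberg_identity_aux (m n c : ℕ) (hc : 0 < c) :
    kloos (m : ℤ) (n : ℤ) c =
      ∑ d ∈ ((m.gcd n).gcd c).divisors,
        (d : ℂ) * kloos ((m * n / d ^ 2 : ℕ) : ℤ) 1 (c / d) := by
  rw [kloos_eq_T m n c hc, T_eq_sigma m n c hc]
  have step : ∀ d ∈ (n.gcd c).divisors,
      (∑ p ∈ W (c/d), ∑ s ∈ Finset.range d,
        ee c ((m * ((n/d * p.2) % (c/d) + s * (c/d)) + d * p.1 : ℕ)))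
      = if d ∣ m then (d : ℂ) * T (m*n/d^2) 1 (c/d) else 0 := by
    intro d hd
    obtain ⟨hdg, hg0⟩ := Nat.mem_divisors.mp hd
    have hdn : d ∣ n := hdg.trans (Nat.gcd_dvd_left _ _)
    have hdc : d ∣ c := hdg.trans (Nat.gcd_dvd_right _ _)
    have hd0 : 0 < d := Nat.pos_of_ne_zero (fun h => hg0 (Nat.eq_zero_of_zero_dvd (h ▸ hdg)))
    exact inner_eval m n c d hc hd0 hdn hdc
  rw [Finset.sum_congr rfl step, ← Finset.sum_filter]
  have hset : (n.gcd c).divisors.filter (fun d => d ∣ m) = ((m.gcd n).gcd c).divisors := by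
    ext d
    simp only [Finset.mem_filter, Nat.mem_divisors]
    constructor
    · rintro ⟨⟨hdg, hg0⟩, hdm⟩
      refine ⟨Nat.dvd_gcd (Nat.dvd_gcd hdm (hdg.trans (Nat.gcd_dvd_left _ _)))
        (hdg.trans (Nat.gcd_dvd_right _ _)), ?_⟩
      intro h
      exact hc.ne' (Nat.eq_zero_of_gcd_eq_zero_right h)
    · rintro ⟨hdg, -⟩
      have hdm : d ∣ m := hdg.trans ((Nat.gcd_dvd_left _ _).trans (Nat.gcd_dvd_left _ _))
      have hdn : d ∣ n := hdg.trans ((Nat.gcd_dvd_left _ _).trans (Nat.gcd_dvd_right _ _))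
      have hdc : d ∣ c := hdg.trans (Nat.gcd_dvd_right _ _)
      refine ⟨⟨Nat.dvd_gcd hdn hdc, ?_⟩, hdm⟩
      intro h
      exact hc.ne' (Nat.eq_zero_of_gcd_eq_zero_right h)
  rw [hset]
  refine Finset.sum_congr rfl (fun d hd => ?_)
  obtain ⟨hdg, hg0⟩ := Nat.mem_divisors.mp hd
  have hdc : d ∣ c := hdg.trans (Nat.gcd_dvd_right _ _)
  have hd0 : 0 < d := Nat.pos_of_ne_zero (fun h => hg0 (Nat.eq_zero_of_zero_dvd (h ▸ hdg)))
  have hcd0 : 0 < c / d := Nat.div_pos (Nat.le_of_dvd hc hdc) hd0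
  have := kloos_eq_T (m*n/d^2) 1 (c/d) hcd0
  rw [Nat.cast_one] at this
  rw [this]

/-- Selberg's identity: `S(m, n; c) = Σ_{d | gcd(m,n,c)} d · S(mn/d², 1; c/d)`. -/
theorem selberg_identity (m n c : ℕ) (hm : 0 < m) (hn : 0 < n) (hc : 0 < c) :
    kloos (m : ℤ) (n : ℤ) c =
      ∑ d ∈ ((m.gcd n).gcd c).divisors,
        (d : ℂ) * kloos ((m * n / d ^ 2 : ℕ) : ℤ) 1 (c / d) :=
  selberg_identity_aux m n c hc

end
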